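/- Let H be a finite-dimensional quasitriangular bialgebra with R-matrix R, and let I ⊆ H* be the subspace of invariant elements, i.e. those a ∈ H* with h⇀a = a↼h for all h ∈ H (where ⇀ and ↼ are the left and right coregular actions dual to right and left multiplication). Then I is a commutative subalgebra of H*. -/

import Mathlib

open TensorProduct

section QT

variable (k H : Type*) [Field k] [Ring H] [Bialgebra k H]

/-- `(Δ ⊗ id)` as a map `H ⊗ H → H ⊗ (H ⊗ H)`. -/
noncomputable def deltaL : H ⊗[k] H →ₗ[k] H ⊗[k] (H ⊗[k] H) :=
  (TensorProduct.assoc k H H H).toLinearMap ∘ₗ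
    TensorProduct.map (Coalgebra.comul (R := k)) LinearMap.id

/-- `(id ⊗ Δ)` as a map `H ⊗ H → H ⊗ (H ⊗ H)`. -/
noncomputable def deltaR : H ⊗[k] H →ₗ[k] H ⊗[k] (H ⊗[k] H) :=
  TensorProduct.map LinearMap.id (Coalgebra.comul (R := k))

/-- embedding of `H ⊗ H` on legs 1, 2 of `H ⊗ H ⊗ H`. -/
noncomputable def leg12 : H ⊗[k] H →ₗ[k] H ⊗[k] (H ⊗[k] H) :=
  TensorProduct.map LinearMap.id ((TensorProduct.mk k H H).flip (1 : H))

/-- embedding of `H ⊗ H` on legs 1, 3 of `H ⊗ H ⊗ H`. -/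
noncomputable def leg13 : H ⊗[k] H →ₗ[k] H ⊗[k] (H ⊗[k] H) :=
  TensorProduct.map LinearMap.id (TensorProduct.mk k H H (1 : H))

/-- embedding of `H ⊗ H` on legs 2, 3 of `H ⊗ H ⊗ H`. -/
noncomputable def leg23 : H ⊗[k] H →ₗ[k] H ⊗[k] (H ⊗[k] H) :=
  TensorProduct.mk k H (H ⊗[k] H) (1 : H)

/-- `R` (with two-sided inverse `Rinv`) is a universal R-matrix (quasitriangular
structure) on the bialgebra `H`. -/
noncomputable def IsUnivRMatrix (R Rinv : H ⊗[k] H) : Prop :=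
  R * Rinv = 1 ∧ Rinv * R = 1 ∧
  deltaL k H R = leg13 k H R * leg23 k H R ∧
  deltaR k H R = leg13 k H R * leg12 k H R ∧
  ∀ h : H, R * Coalgebra.comul h =
    (TensorProduct.comm k H H) (Coalgebra.comul h) * R

/-- `τ` is an involutive coalgebra map and algebra anti-automorphism of `H`. -/
noncomputable def IsSkewInvolution (τ : H →ₗ[k] H) : Prop :=
  (∀ x : H, τ (τ x) = x) ∧ (∀ x y : H, τ (x * y) = τ y * τ x) ∧ τ 1 = 1 ∧
  Coalgebra.comul (R := k) ∘ₗ τ = (TensorProduct.map τ τ) ∘ₗ Coalgebra.comul ∧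
  Coalgebra.counit (R := k) ∘ₗ τ = Coalgebra.counit

end QT

section DualAlg

variable (k H : Type*) [Field k] [Ring H] [Bialgebra k H]

/-- convolution product on the dual `H* = Module.Dual k H`. -/
noncomputable def conv (f g : Module.Dual k H) : Module.Dual k H :=
  (LinearMap.mul' k k) ∘ₗ (TensorProduct.map f g) ∘ₗ (Coalgebra.comul (R := k))

/-- left coregular action `h ⇀ a`, `(h ⇀ a)(x) = a (x * h)`. -/
noncomputable def lact (h : H) (a : Module.Dual k H) : Module.Dual k H :=
  a ∘ₗ LinearMap.mulRight k h

/-- right coregular action `a ↼ h`, `(a ↼ h)(x) = a (h * x)`. -/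
noncomputable def ract (a : Module.Dual k H) (h : H) : Module.Dual k H :=
  a ∘ₗ LinearMap.mulLeft k h

/-- an invariant element of `H*`: `h ⇀ a = a ↼ h` for all `h`. -/
noncomputable def IsInvariantDual (a : Module.Dual k H) : Prop :=
  ∀ h : H, lact k H h a = ract k H a h

end DualAlg


section Aux

variable {k H : Type*} [Field k] [Ring H] [Bialgebra k H]

lemma isInvariantDual_apply_comm {a : Module.Dual k H} (ha : IsInvariantDual k H a) (x y : H) :
    a (x * y) = a (y * x) := by
  have := congrArg (fun f : Module.Dual k H => f x) (ha y)
  simpa [lact, ract] using this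

lemma F_tracial {a b : Module.Dual k H} (ha : IsInvariantDual k H a)
    (hb : IsInvariantDual k H b) (u v : H ⊗[k] H) :
    (LinearMap.mul' k k ∘ₗ TensorProduct.map a b) (u * v) =
    (LinearMap.mul' k k ∘ₗ TensorProduct.map a b) (v * u) := by
  induction u using TensorProduct.induction_on with
  | zero => simp
  | tmul x y =>
    induction v using TensorProduct.induction_on with
    | zero => simp
    | tmul z w =>
      simp only [Algebra.TensorProduct.tmul_mul_tmul, LinearMap.coe_comp,
        Function.comp_apply, TensorProduct.map_tmul, LinearMap.mul'_apply]
      rw [isInvariantDual_apply_comm ha x z, isInvariantDual_apply_comm hb y w]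
    | add p q hp hq => simp only [mul_add, add_mul, map_add, hp, hq]
  | add p q hp hq => simp only [mul_add, add_mul, map_add, hp, hq]

lemma F_comm (a b : Module.Dual k H) (t : H ⊗[k] H) :
    (LinearMap.mul' k k ∘ₗ TensorProduct.map a b) ((TensorProduct.comm k H H) t) =
    (LinearMap.mul' k k ∘ₗ TensorProduct.map b a) t := by
  induction t using TensorProduct.induction_on with
  | zero => simp
  | tmul x y => simp [mul_comm]
  | add p q hp hq => simp only [map_add]; simp only [LinearMap.coe_comp, Function.comp_apply] at hp hq ⊢; rw [hp, hq]

end Aux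

/-- for a finite-dimensional quasitriangular bialgebra `H`, the subspace
`I ⊆ H*` of invariant elements is a commutative subalgebra of the dual algebra `H*`
(with convolution product): it contains the unit `ε`, is closed under convolution,
and any two invariant elements commute. -/
theorem invariants_commutative_subalgebra
    {k H : Type*} [Field k] [Ring H] [Bialgebra k H] [FiniteDimensional k H]
    (R Rinv : H ⊗[k] H) (hR : IsUnivRMatrix k H R Rinv) :
    IsInvariantDual k H (Coalgebra.counit (R := k) (A := H)) ∧
    (∀ a b : Module.Dual k H, IsInvariantDual k H a → IsInvariantDual k H b →
      IsInvariantDual k H (conv k H a b)) ∧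
    (∀ a b : Module.Dual k H, IsInvariantDual k H a → IsInvariantDual k H b →
      conv k H a b = conv k H b a) := by
  obtain ⟨hRR, hRR', -, -, hqt⟩ := hR
  refine ⟨?_, ?_, ?_⟩
  · intro h
    ext x
    simp [lact, ract, Bialgebra.counit_mul, mul_comm]
  · intro a b ha hb h
    ext x
    simp only [lact, ract, conv, LinearMap.coe_comp, Function.comp_apply,
      LinearMap.mulRight_apply, LinearMap.mulLeft_apply]
    rw [Bialgebra.comul_mul, Bialgebra.comul_mul]
    exact F_tracial ha hb _ _
  · intro a b ha hb
    ext x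
    simp only [conv, LinearMap.coe_comp, Function.comp_apply]
    have h1 : Coalgebra.comul (R := k) x =
        Rinv * ((TensorProduct.comm k H H) (Coalgebra.comul x) * R) := by
      rw [← hqt x, ← mul_assoc, hRR', one_mul]
    calc (LinearMap.mul' k k ∘ₗ TensorProduct.map a b) (Coalgebra.comul x)
        = (LinearMap.mul' k k ∘ₗ TensorProduct.map a b)
            (Rinv * ((TensorProduct.comm k H H) (Coalgebra.comul x) * R)) := by rw [← h1]
      _ = (LinearMap.mul' k k ∘ₗ TensorProduct.map a b)
            (((TensorProduct.comm k H H) (Coalgebra.comul x) * R) * Rinv) :=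
            F_tracial ha hb _ _
      _ = (LinearMap.mul' k k ∘ₗ TensorProduct.map a b)
            ((TensorProduct.comm k H H) (Coalgebra.comul x)) := by
            rw [mul_assoc, hRR, mul_one]
      _ = (LinearMap.mul' k k ∘ₗ TensorProduct.map b a) (Coalgebra.comul x) :=
            F_comm a b _
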